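/- Let E = [−2π, −π) ∪ [π, 2π). There exists a measurable set G₀ ⊆ (([−2π, −11π/8) ∪ [−9π/8, −π)) − 2π) ∪ [−2π, −3π/2) that is 2π-translation congruent to [−2π, −11π/8) ∪ [−9π/8, −π) and 2-dilation congruent to [−2π, −3π/2), and for any such G₀ the set G = [5π/8, 7π/8) ∪ [π, 5π/4) ∪ [7π/2, 4π) ∪ [−3π/4, −π/2) ∪ G₀ is a dyadic wavelet set contained in (E − 2π) ∪ E ∪ (E + 2π) for which G ∩ [−π, π) has positive measure and (E, G) is not an interpolation pair. In particular, a wavelet set contained in (E − 2π) ∪ E ∪ (E + 2π) need not form an interpolation pair with E. -/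

import Mathlib

open MeasureTheory Set
open scoped Real symmDiff

noncomputable section

/-- An a.e. (modulo Lebesgue-null sets) partition of the set `A` by the family `P`. -/
def IsAEPartition {ι : Type*} (P : ι → Set ℝ) (A : Set ℝ) : Prop :=
  volume (A ∆ (⋃ i, P i)) = 0 ∧ ∀ i j : ι, i ≠ j → volume (P i ∩ P j) = 0

/-- `E ⊆ ℝ` is a dyadic wavelet set: its `2πℤ`-translates and its `2ℤ`-dilates each
partition `ℝ` modulo Lebesgue-null sets. -/
def IsDyadicWaveletSet (E : Set ℝ) : Prop :=
  MeasurableSet E ∧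
  (∀ᵐ x : ℝ ∂volume, ∃! n : ℤ, x + 2 * Real.pi * n ∈ E) ∧
  (∀ᵐ x : ℝ ∂volume, ∃! k : ℤ, (2 : ℝ) ^ k * x ∈ E)

/-- `σ` is (a representative of) the interpolation map `σ_E^F` for wavelet sets `E, F`. -/
def IsInterpolationMap (E F : Set ℝ) (σ : ℝ → ℝ) : Prop :=
  Measurable σ ∧ σ 0 = 0 ∧
  (∀ᵐ s : ℝ ∂volume, s ∈ E → σ s ∈ F ∧ ∃ n : ℤ, σ s - s = 2 * Real.pi * n) ∧
  (∀ n : ℤ, ∀ᵐ s : ℝ ∂volume, (2 : ℝ) ^ (-n) * s ∈ E →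
    σ s = (2 : ℝ) ^ n * σ ((2 : ℝ) ^ (-n) * s))

/-- The `2π`-congruence domain of a map `σ`. -/
def CongruenceDomain (σ : ℝ → ℝ) : Set ℝ :=
  {s : ℝ | ∃ n : ℤ, σ s - s = 2 * Real.pi * n}

/-- `A` is `2π`-translation congruent to `B`. -/
def TransCongruent (A B : Set ℝ) : Prop :=
  ∃ P : ℤ → Set ℝ, (∀ n, MeasurableSet (P n)) ∧ IsAEPartition P A ∧
    IsAEPartition (fun (n : ℤ) => (fun x => x + 2 * Real.pi * (n : ℝ)) '' P n) B

/-- `A` is `2`-dilation congruent to `B`. -/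
def DilCongruent (A B : Set ℝ) : Prop :=
  ∃ P : ℤ → Set ℝ, (∀ n, MeasurableSet (P n)) ∧ IsAEPartition P A ∧
    IsAEPartition (fun (n : ℤ) => (fun x => (2 : ℝ) ^ n * x) '' P n) B

/-- The properties required of the piece `G₀` in Example 9 of the paper: a measurable
subset of `(([−2π, −11π/8) ∪ [−9π/8, −π)) − 2π) ∪ [−2π, −3π/2)` that is
`2π`-translation congruent to `[−2π, −11π/8) ∪ [−9π/8, −π)` and `2`-dilation
congruent to `[−2π, −3π/2)`. -/
def GoodGzero (G₀ : Set ℝ) : Prop :=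
  MeasurableSet G₀ ∧
  G₀ ⊆ ((fun x => x - 2 * π) ''
          (Ico (-(2 * π)) (-(11 * π / 8)) ∪ Ico (-(9 * π / 8)) (-π))) ∪
        Ico (-(2 * π)) (-(3 * π / 2)) ∧
  TransCongruent G₀ (Ico (-(2 * π)) (-(11 * π / 8)) ∪ Ico (-(9 * π / 8)) (-π)) ∧
  DilCongruent G₀ (Ico (-(2 * π)) (-(3 * π / 2)))

/-- The set `G` of Example 9 of the paper. -/
def Gset (G₀ : Set ℝ) : Set ℝ :=
  Ico (5 * π / 8) (7 * π / 8) ∪ Ico π (5 * π / 4) ∪ Ico (7 * π / 2) (4 * π) ∪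
    Ico (-(3 * π / 4)) (-(π / 2)) ∪ G₀

lemma null_of_add_sub (c : ℝ) {s t : Set ℝ} (hs : volume s = 0)
    (h : ∀ x ∈ t, x + c ∈ s) : volume t = 0 := by
  refine measure_mono_null (fun x hx => h x hx) ?_
  calc volume ((fun x => x + c) ⁻¹' s) = volume s := measure_preimage_add_right volume c s
  _ = 0 := hs

lemma null_of_mul_sub {c : ℝ} (hc : c ≠ 0) {s t : Set ℝ} (hs : volume s = 0)
    (h : ∀ x ∈ t, c * x ∈ s) : volume t = 0 := by
  refine measure_mono_null (fun x hx => h x hx) ?_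
  calc volume ((fun x => c * x) ⁻¹' s) = ENNReal.ofReal |c⁻¹| * volume s :=
        Real.volume_preimage_mul_left hc s
  _ = 0 := by rw [hs, mul_zero]

lemma tile_transfer (e : ℤ → ℝ → ℝ)
    (h0 : ∀ x, e 0 x = x)
    (hadd : ∀ n m x, e n (e m x) = e (n + m) x)
    (hnull : ∀ n : ℤ, ∀ s : Set ℝ, volume s = 0 → volume (e n ⁻¹' s) = 0)
    (A B : Set ℝ) (P : ℤ → Set ℝ)
    (hPB : IsAEPartition P B)
    (hPA : IsAEPartition (fun n => e n '' P n) A)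
    (hA : ∀ᵐ x : ℝ ∂volume, ∃! n : ℤ, e n x ∈ A) :
    ∀ᵐ x : ℝ ∂volume, ∃! n : ℤ, e n x ∈ B := by
  classical
  set N : Set ℝ := (B ∆ (⋃ n, P n)) ∪ (A ∆ (⋃ n, e n '' P n)) ∪
      (⋃ p : ℤ × ℤ, if p.1 = p.2 then (∅ : Set ℝ) else P p.1 ∩ P p.2) ∪
      (⋃ p : ℤ × ℤ, if p.1 = p.2 then (∅ : Set ℝ)
        else (e p.1 '' P p.1) ∩ (e p.2 '' P p.2)) with hN
  have hNnull : volume N = 0 := by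
    refine measure_union_null (measure_union_null (measure_union_null hPB.1 hPA.1) ?_) ?_
    · refine measure_iUnion_null fun p => ?_
      by_cases h : p.1 = p.2 <;> simp [h]
      exact hPB.2 p.1 p.2 h
    · refine measure_iUnion_null fun p => ?_
      by_cases h : p.1 = p.2 <;> simp [h]
      exact hPA.2 p.1 p.2 h
  have hbad : volume (⋃ k : ℤ, e k ⁻¹' N) = 0 :=
    measure_iUnion_null fun k => hnull k N hNnull
  have hGood : ∀ᵐ x : ℝ ∂volume, ∀ k : ℤ, e k x ∉ N := by
    rw [MeasureTheory.ae_iff]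
    refine measure_mono_null (fun x hx => ?_) hbad
    simp only [Set.mem_setOf_eq, not_forall, not_not] at hx
    obtain ⟨k, hk⟩ := hx
    exact Set.mem_iUnion.2 ⟨k, hk⟩
  filter_upwards [hGood, hA] with x hx hxA
  obtain ⟨m, hmA, hmuniq⟩ := hxA
  -- helper: from A-membership to partition piece
  have hexu : ∀ t : ℝ, t ∉ N → t ∈ A → ∃ n y, y ∈ P n ∧ e n y = t := by
    intro t htN htA
    have : t ∈ ⋃ n, e n '' P n := by
      by_contra h
      exact htN (Or.inl (Or.inl (Or.inr (Or.inl ⟨htA, h⟩))))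
    obtain ⟨S, ⟨n, rfl⟩, hts⟩ := this
    obtain ⟨y, hy, hyt⟩ := hts
    exact ⟨n, y, hy, hyt⟩
  -- helper: from B-membership to P-piece
  have hBP : ∀ k : ℤ, e k x ∈ B → ∃ n, e k x ∈ P n := by
    intro k hkB
    have : e k x ∈ ⋃ n, P n := by
      by_contra h
      exact hx k (Or.inl (Or.inl (Or.inl (Or.inl ⟨hkB, h⟩))))
    exact Set.mem_iUnion.1 this
  -- from P-piece to A
  have hPA' : ∀ k n : ℤ, e k x ∈ P n → e (n + k) x ∈ A ∧ e (n + k) x ∈ e n '' P n := by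
    intro k n hkP
    have himg : e (n + k) x ∈ e n '' P n := by
      refine ⟨e k x, hkP, ?_⟩
      rw [hadd]
    have hU : e (n + k) x ∈ ⋃ j, e j '' P j := Set.mem_iUnion.2 ⟨n, himg⟩
    have : e (n + k) x ∈ A := by
      by_contra h
      exact hx (n + k) (Or.inl (Or.inl (Or.inr (Or.inr ⟨hU, h⟩))))
    exact ⟨this, himg⟩
  obtain ⟨n, y, hy, hyt⟩ := hexu (e m x) (hx m) hmA
  have hyx : y = e (m - n) x := by
    have h1 : e (-n) (e n y) = y := by rw [hadd, neg_add_cancel, h0]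
    rw [hyt, hadd] at h1
    rw [← h1]; congr 1; ring
  have hmem : e (m - n) x ∈ B := by
    have hU : e (m - n) x ∈ ⋃ j, P j := Set.mem_iUnion.2 ⟨n, hyx ▸ hy⟩
    by_contra h
    exact hx (m - n) (Or.inl (Or.inl (Or.inl (Or.inr ⟨hU, h⟩))))
  refine ⟨m - n, hmem, ?_⟩
  intro k hkB
  obtain ⟨n', hn'⟩ := hBP k hkB
  obtain ⟨hA', himg'⟩ := hPA' k n' hn'
  have hm' : n' + k = m := hmuniq _ hA'
  -- show n' = n
  have hximg : e m x ∈ e n '' P n := ⟨y, hy, hyt⟩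
  have hximg' : e m x ∈ e n' '' P n' := hm' ▸ himg'
  have hnn' : n' = n := by
    by_contra hne
    apply hx m
    refine Or.inr (Set.mem_iUnion.2 ⟨(n', n), ?_⟩)
    simp only [hne, if_false]
    exact ⟨hximg', hximg⟩
  omega


lemma trans_tiles : ∀ x : ℝ, ∃! n : ℤ, x + 2 * π * n ∈ Ico (0:ℝ) (2 * π) := by
  intro x
  have h := existsUnique_add_zsmul_mem_Ico Real.two_pi_pos x 0
  simp only [zero_add, zsmul_eq_mul] at h
  refine existsUnique_congr (fun n => ?_) |>.2 h
  have he : x + 2 * π * (n:ℝ) = x + (n:ℝ) * (2 * π) := by ring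
  rw [he]

lemma log_window {t : ℝ} (ht : 0 < t) (k : ℤ) :
    ((2:ℝ) ^ k * t ∈ Ico π (2 * π) ↔
      Real.log t + k • Real.log 2 ∈ Ico (Real.log π) (Real.log π + Real.log 2)) ∧
    ((2:ℝ) ^ k * t ∈ Ioc π (2 * π) ↔
      Real.log t + k • Real.log 2 ∈ Ioc (Real.log π) (Real.log π + Real.log 2)) := by
  have h2k : (0:ℝ) < (2:ℝ) ^ k := zpow_pos two_pos k
  have hkt : (0:ℝ) < (2:ℝ) ^ k * t := mul_pos h2k ht
  have hlog : Real.log ((2:ℝ) ^ k * t) = Real.log t + k • Real.log 2 := by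
    rw [Real.log_mul (ne_of_gt h2k) (ne_of_gt ht), Real.log_zpow]
    push_cast [zsmul_eq_mul]; ring
  have hlog2pi : Real.log (2 * π) = Real.log π + Real.log 2 := by
    rw [Real.log_mul two_ne_zero (ne_of_gt Real.pi_pos)]; ring
  constructor
  · constructor
    · rintro ⟨h1, h2⟩
      exact ⟨by rw [← hlog]; exact (Real.log_le_log_iff Real.pi_pos hkt).2 h1,
        by rw [← hlog, ← hlog2pi]; exact (Real.log_lt_log_iff hkt Real.two_pi_pos).2 h2⟩
    · rintro ⟨h1, h2⟩
      rw [← hlog] at h1 h2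
      exact ⟨(Real.log_le_log_iff Real.pi_pos hkt).1 h1,
        (Real.log_lt_log_iff hkt Real.two_pi_pos).1 (by rwa [hlog2pi])⟩
  · constructor
    · rintro ⟨h1, h2⟩
      exact ⟨by rw [← hlog]; exact (Real.log_lt_log_iff Real.pi_pos hkt).2 h1,
        by rw [← hlog, ← hlog2pi]; exact (Real.log_le_log_iff hkt Real.two_pi_pos).2 h2⟩
    · rintro ⟨h1, h2⟩
      rw [← hlog] at h1 h2
      exact ⟨(Real.log_lt_log_iff Real.pi_pos hkt).1 h1,
        (Real.log_le_log_iff hkt Real.two_pi_pos).1 (by rwa [hlog2pi])⟩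

lemma dil_pos_Ico {t : ℝ} (ht : 0 < t) :
    ∃! k : ℤ, (2:ℝ) ^ k * t ∈ Ico π (2 * π) := by
  have hlog2 : (0:ℝ) < Real.log 2 := Real.log_pos one_lt_two
  have h := existsUnique_add_zsmul_mem_Ico hlog2 (Real.log t) (Real.log π)
  exact existsUnique_congr (fun k => (log_window ht k).1) |>.2 h

lemma dil_pos_Ioc {t : ℝ} (ht : 0 < t) :
    ∃! k : ℤ, (2:ℝ) ^ k * t ∈ Ioc π (2 * π) := by
  have hlog2 : (0:ℝ) < Real.log 2 := Real.log_pos one_lt_two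
  have h := existsUnique_add_zsmul_mem_Ioc hlog2 (Real.log t) (Real.log π)
  exact existsUnique_congr (fun k => (log_window ht k).2) |>.2 h

lemma dil_tiles : ∀ᵐ x : ℝ ∂volume,
    ∃! k : ℤ, (2:ℝ) ^ k * x ∈ Ico (-(2 * π)) (-π) ∪ Ico π (2 * π) := by
  have h0 : volume ({0} : Set ℝ) = 0 := measure_singleton 0
  rw [MeasureTheory.ae_iff]
  refine measure_mono_null (fun x hx => ?_) h0
  simp only [Set.mem_setOf_eq] at hx
  simp only [Set.mem_singleton_iff]
  by_contra hx0
  apply hx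
  rcases lt_or_gt_of_ne hx0 with hneg | hpos
  · -- x < 0
    obtain ⟨k, hk, hku⟩ := dil_pos_Ioc (neg_pos.2 hneg)
    have hmem : ∀ j : ℤ, ((2:ℝ) ^ j * x ∈ Ico (-(2 * π)) (-π) ∪ Ico π (2 * π)) ↔
        (2:ℝ) ^ j * (-x) ∈ Ioc π (2 * π) := by
      intro j
      have hjx : (2:ℝ) ^ j * x < 0 := mul_neg_of_pos_of_neg (zpow_pos two_pos j) hneg
      constructor
      · rintro (⟨h1, h2⟩ | ⟨h1, h2⟩)
        · constructor <;> [linarith [neg_lt_neg h2]; nlinarith]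
        · linarith [Real.pi_pos]
      · rintro ⟨h1, h2⟩
        left; constructor <;> nlinarith
    refine ⟨k, (hmem k).2 hk, fun j hj => hku j ((hmem j).1 hj)⟩
  · obtain ⟨k, hk, hku⟩ := dil_pos_Ico hpos
    have hmem : ∀ j : ℤ, ((2:ℝ) ^ j * x ∈ Ico (-(2 * π)) (-π) ∪ Ico π (2 * π)) ↔
        (2:ℝ) ^ j * x ∈ Ico π (2 * π) := by
      intro j
      have hjx : (0:ℝ) < (2:ℝ) ^ j * x := mul_pos (zpow_pos two_pos j) hpos
      constructor
      · rintro (⟨h1, h2⟩ | h)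
        · nlinarith [Real.pi_pos]
        · exact h
      · exact fun h => Or.inr h
    refine ⟨k, (hmem k).2 hk, fun j hj => hku j ((hmem j).1 hj)⟩


def Xpc : ℤ → Set ℝ := fun n =>
  if n = 0 then Ico (5 * π / 8) (7 * π / 8) ∪ Ico π (5 * π / 4)
  else if n = -1 then Ico (7 * π / 2) (4 * π)
  else if n = 1 then Ico (-(3 * π / 4)) (-(π / 2))
  else ∅

lemma Xpc_cases (n : ℤ) : Xpc n = ∅ ∨ n = 0 ∨ n = -1 ∨ n = 1 := by
  unfold Xpc; split_ifs with h1 h2 h3 <;> tauto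

lemma Xpc_lb {n : ℤ} {x : ℝ} (hx : x ∈ Xpc n) : -(3 * π / 4) ≤ x := by
  have hπ := Real.pi_pos
  unfold Xpc at hx; split_ifs at hx with h1 h2 h3
  · rcases hx with ⟨h, _⟩ | ⟨h, _⟩ <;> linarith
  · rcases hx with ⟨h, _⟩; linarith
  · exact hx.1
  · exact absurd hx (Set.notMem_empty x)

lemma Xpc_zero : Xpc 0 = Ico (5 * π / 8) (7 * π / 8) ∪ Ico π (5 * π / 4) := by
  unfold Xpc; norm_num

lemma Xpc_neg_one : Xpc (-1) = Ico (7 * π / 2) (4 * π) := by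
  unfold Xpc; norm_num

lemma Xpc_one : Xpc 1 = Ico (-(3 * π / 4)) (-(π / 2)) := by
  unfold Xpc; norm_num

lemma iUnion_Xpc : (⋃ n : ℤ, Xpc n) =
    Ico (5 * π / 8) (7 * π / 8) ∪ Ico π (5 * π / 4) ∪ Ico (7 * π / 2) (4 * π) ∪
      Ico (-(3 * π / 4)) (-(π / 2)) := by
  apply Set.Subset.antisymm
  · refine Set.iUnion_subset fun n x hx => ?_
    rcases Xpc_cases n with h | h | h | h
    · rw [h] at hx; exact absurd hx (Set.notMem_empty x)
    · subst h; rw [Xpc_zero] at hx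
      simp only [Set.mem_union] at hx ⊢; tauto
    · subst h; rw [Xpc_neg_one] at hx
      simp only [Set.mem_union] at hx ⊢; tauto
    · subst h; rw [Xpc_one] at hx
      simp only [Set.mem_union] at hx ⊢; tauto
  · intro x hx
    rcases hx with ((hx | hx) | hx) | hx
    · exact Set.mem_iUnion.2 ⟨0, by rw [Xpc_zero]; exact Or.inl hx⟩
    · exact Set.mem_iUnion.2 ⟨0, by rw [Xpc_zero]; exact Or.inr hx⟩
    · exact Set.mem_iUnion.2 ⟨-1, by rw [Xpc_neg_one]; exact hx⟩
    · exact Set.mem_iUnion.2 ⟨1, by rw [Xpc_one]; exact hx⟩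

lemma symmDiff_union_subset (x a b : Set ℝ) : (x ∪ a) ∆ (x ∪ b) ⊆ a ∆ b := by
  intro t ht
  simp only [Set.mem_symmDiff, Set.mem_union] at ht ⊢
  tauto

lemma Xpc_disj {n m : ℤ} (hnm : n ≠ m) : Xpc n ∩ Xpc m = ∅ := by
  have hπ := Real.pi_pos
  have key : ∀ a b : ℤ, a ≠ b → ∀ x, x ∈ Xpc a → x ∈ Xpc b → False := by
    intro a b hab x hxa hxb
    rcases Xpc_cases a with h | h | h | h
    · rw [h] at hxa; exact hxa
    all_goals subst h
    all_goals rcases Xpc_cases b with h' | h' | h' | h'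
    all_goals first
      | (rw [h'] at hxb; exact hxb)
      | (subst h';
          first | exact hab rfl |
            (simp only [Xpc_zero, Xpc_neg_one, Xpc_one, Set.mem_union, Set.mem_Ico]
               at hxa hxb;
             first
               | (rcases hxa with hxa | hxa <;> rcases hxb with hxb | hxb <;>
                   obtain ⟨h1, h2⟩ := hxa <;> obtain ⟨h3, h4⟩ := hxb <;> linarith)
               | (rcases hxa with hxa | hxa <;> obtain ⟨h1, h2⟩ := hxa <;>
                   obtain ⟨h3, h4⟩ := hxb <;> linarith)
               | (rcases hxb with hxb | hxb <;> obtain ⟨h1, h2⟩ := hxb <;>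
                   obtain ⟨h3, h4⟩ := hxa <;> linarith)
               | (obtain ⟨h1, h2⟩ := hxa; obtain ⟨h3, h4⟩ := hxb; linarith)))
  ext x
  simp only [Set.mem_inter_iff, Set.mem_empty_iff_false, iff_false, not_and]
  exact fun hx hx2 => key n m hnm x hx hx2

lemma mem_image_add {c : ℝ} {S : Set ℝ} {x : ℝ} :
    x ∈ (fun y => y + c) '' S ↔ x - c ∈ S := by
  constructor
  · rintro ⟨y, hy, rfl⟩; simpa using hy
  · intro h; exact ⟨x - c, h, by ring⟩

lemma hXloc : ∀ (n : ℤ) (x : ℝ), x - 2 * π * n ∈ Xpc n →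
    (n = 0 ∧ 5 * π / 8 ≤ x ∧ x < 5 * π / 4) ∨
    (n = -1 ∧ 3 * π / 2 ≤ x ∧ x < 2 * π) ∨
    (n = 1 ∧ 5 * π / 4 ≤ x ∧ x < 3 * π / 2) := by
  have hπ := Real.pi_pos
  intro n x hx
  rcases Xpc_cases n with h | h | h | h
  · rw [h] at hx; exact absurd hx (Set.notMem_empty _)
  · subst h; rw [Xpc_zero] at hx
    push_cast at hx
    rcases hx with ⟨h1, h2⟩ | ⟨h1, h2⟩ <;> exact Or.inl ⟨rfl, by constructor <;> linarith⟩
  · subst h; rw [Xpc_neg_one] at hx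
    push_cast at hx
    obtain ⟨h1, h2⟩ := hx
    exact Or.inr (Or.inl ⟨rfl, by constructor <;> linarith⟩)
  · subst h; rw [Xpc_one] at hx
    push_cast at hx
    obtain ⟨h1, h2⟩ := hx
    exact Or.inr (Or.inr ⟨rfl, by constructor <;> linarith⟩)

lemma hXim_iff : ∀ x : ℝ, (∃ n : ℤ, x - 2 * π * n ∈ Xpc n) ↔
    x ∈ Ico (5 * π / 8) (7 * π / 8) ∪ Ico π (5 * π / 4) ∪ Ico (3 * π / 2) (2 * π) ∪
      Ico (5 * π / 4) (3 * π / 2) := by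
  have hπ := Real.pi_pos
  intro x
  constructor
  · rintro ⟨n, hn⟩
    rcases Xpc_cases n with h | h | h | h
    · rw [h] at hn; exact absurd hn (Set.notMem_empty _)
    · subst h; rw [Xpc_zero] at hn; push_cast at hn
      rcases hn with ⟨h1, h2⟩ | ⟨h1, h2⟩
      · exact Or.inl (Or.inl (Or.inl ⟨by linarith, by linarith⟩))
      · exact Or.inl (Or.inl (Or.inr ⟨by linarith, by linarith⟩))
    · subst h; rw [Xpc_neg_one] at hn; push_cast at hn
      obtain ⟨h1, h2⟩ := hn
      exact Or.inl (Or.inr ⟨by linarith, by linarith⟩)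
    · subst h; rw [Xpc_one] at hn; push_cast at hn
      obtain ⟨h1, h2⟩ := hn
      exact Or.inr ⟨by linarith, by linarith⟩
  · rintro (((⟨h1, h2⟩ | ⟨h1, h2⟩) | ⟨h1, h2⟩) | ⟨h1, h2⟩)
    · exact ⟨0, by rw [Xpc_zero]; push_cast; exact Or.inl ⟨by linarith, by linarith⟩⟩
    · exact ⟨0, by rw [Xpc_zero]; push_cast; exact Or.inr ⟨by linarith, by linarith⟩⟩
    · exact ⟨-1, by rw [Xpc_neg_one]; push_cast; exact ⟨by linarith, by linarith⟩⟩
    · exact ⟨1, by rw [Xpc_one]; push_cast; exact ⟨by linarith, by linarith⟩⟩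

lemma hAshift : ∀ x : ℝ,
    (x - 2 * π ∈ Ico (-(2 * π)) (-(11 * π / 8)) ∪ Ico (-(9 * π / 8)) (-π)) ↔
    x ∈ Ico 0 (5 * π / 8) ∪ Ico (7 * π / 8) π := by
  intro x
  constructor
  · rintro (⟨h1, h2⟩ | ⟨h1, h2⟩)
    · exact Or.inl ⟨by linarith, by linarith⟩
    · exact Or.inr ⟨by linarith, by linarith⟩
  · rintro (⟨h1, h2⟩ | ⟨h1, h2⟩)
    · exact Or.inl ⟨by linarith, by linarith⟩
    · exact Or.inr ⟨by linarith, by linarith⟩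

lemma gset_trans_tiling (G₀ : Set ℝ) (hsub : ∀ x ∈ G₀, x < -(3 * π / 2))
    (P : ℤ → Set ℝ) (hPG : IsAEPartition P G₀)
    (hPA : IsAEPartition (fun n : ℤ => (fun x => x + 2 * π * (n : ℝ)) '' P n)
      (Ico (-(2 * π)) (-(11 * π / 8)) ∪ Ico (-(9 * π / 8)) (-π))) :
    ∀ᵐ x : ℝ ∂volume, ∃! n : ℤ, x + 2 * π * n ∈ Gset G₀ := by
  have hπ := Real.pi_pos
  set A : Set ℝ := Ico (-(2 * π)) (-(11 * π / 8)) ∪ Ico (-(9 * π / 8)) (-π) with hAdef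
  set T : Set ℝ := ⋃ n : ℤ, (fun x => x + 2 * π * (n : ℝ)) '' P n with hTdef
  set Q : ℤ → Set ℝ := fun n => P (n - 1) ∪ Xpc n with hQdef
  set e : ℤ → ℝ → ℝ := fun n x => x + 2 * π * n with hedef
  have hPsub : ∀ k : ℤ, ∀ x ∈ P k, x ∈ G₀ ∨ x ∈ G₀ ∆ (⋃ j, P j) := by
    intro k x hx
    by_cases hG : x ∈ G₀
    · exact Or.inl hG
    · exact Or.inr (Or.inr ⟨Set.mem_iUnion.2 ⟨k, hx⟩, hG⟩)
  -- membership in images of Q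
  have hQmem : ∀ (n : ℤ) (x : ℝ), x ∈ e n '' Q n ↔
      (x - 2 * π * n ∈ P (n - 1) ∨ x - 2 * π * n ∈ Xpc n) := by
    intro n x
    rw [show e n '' Q n = (fun y => y + 2 * π * (n:ℝ)) '' Q n from rfl, mem_image_add]
    rfl
  have hPimg : ∀ (k : ℤ) (x : ℝ), x - 2 * π * (k + 1 : ℤ) ∈ P k →
      x - 2 * π ∈ (fun y => y + 2 * π * (k : ℝ)) '' P k := by
    intro k x hx
    refine ⟨x - 2 * π * ((k : ℝ) + 1), by exact_mod_cast hx, by ring⟩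
  have hPimg' : ∀ (k : ℤ) (x : ℝ), x - 2 * π ∈ (fun y => y + 2 * π * (k : ℝ)) '' P k →
      x - 2 * π * (k + 1 : ℤ) ∈ P k := by
    rintro k x ⟨y, hy, hxy⟩
    have hxy' : y + 2 * π * (k : ℝ) = x - 2 * π := hxy
    have : x - 2 * π * ((k + 1 : ℤ) : ℝ) = y := by push_cast; linarith
    rwa [this]
  -- Q partitions Gset G₀
  have hQG : IsAEPartition Q (Gset G₀) := by
    constructor
    · have hUQ : (⋃ n, Q n) =
          (Ico (5 * π / 8) (7 * π / 8) ∪ Ico π (5 * π / 4) ∪ Ico (7 * π / 2) (4 * π) ∪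
            Ico (-(3 * π / 4)) (-(π / 2))) ∪ ⋃ n, P n := by
        apply Set.Subset.antisymm
        · refine Set.iUnion_subset fun n x hx => ?_
          rcases hx with hx | hx
          · exact Or.inr (Set.mem_iUnion.2 ⟨n - 1, hx⟩)
          · exact Or.inl (iUnion_Xpc ▸ Set.mem_iUnion.2 ⟨n, hx⟩)
        · rintro x (hx | hx)
          · rw [← iUnion_Xpc] at hx
            obtain ⟨n, hn⟩ := Set.mem_iUnion.1 hx
            exact Set.mem_iUnion.2 ⟨n, Or.inr hn⟩
          · obtain ⟨m, hm⟩ := Set.mem_iUnion.1 hx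
            exact Set.mem_iUnion.2 ⟨m + 1, Or.inl (by simpa using hm)⟩
      rw [hUQ]
      have hGeq : Gset G₀ =
          (Ico (5 * π / 8) (7 * π / 8) ∪ Ico π (5 * π / 4) ∪ Ico (7 * π / 2) (4 * π) ∪
            Ico (-(3 * π / 4)) (-(π / 2))) ∪ G₀ := rfl
      rw [hGeq]
      have hsub2 : ((Ico (5 * π / 8) (7 * π / 8) ∪ Ico π (5 * π / 4) ∪ Ico (7 * π / 2) (4 * π) ∪
            Ico (-(3 * π / 4)) (-(π / 2))) ∪ G₀) ∆
          ((Ico (5 * π / 8) (7 * π / 8) ∪ Ico π (5 * π / 4) ∪ Ico (7 * π / 2) (4 * π) ∪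
            Ico (-(3 * π / 4)) (-(π / 2))) ∪ ⋃ n, P n) ⊆ G₀ ∆ (⋃ n, P n) :=
        symmDiff_union_subset _ _ _
      exact measure_mono_null hsub2 hPG.1
    · intro n m hnm
      have hsub3 : Q n ∩ Q m ⊆ (P (n - 1) ∩ P (m - 1)) ∪ (G₀ ∆ (⋃ j, P j)) := by
        rintro x ⟨hxn, hxm⟩
        rcases hxn with hp | hx8 <;> rcases hxm with hp' | hx8'
        · exact Or.inl ⟨hp, hp'⟩
        · rcases hPsub _ _ hp with hG | hbad
          · exact absurd (Xpc_lb hx8') (by have := hsub x hG; intro h; linarith)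
          · exact Or.inr hbad
        · rcases hPsub _ _ hp' with hG | hbad
          · exact absurd (Xpc_lb hx8) (by have := hsub x hG; intro h; linarith)
          · exact Or.inr hbad
        · exact absurd (Set.mem_inter hx8 hx8') (by rw [Xpc_disj hnm]; exact Set.notMem_empty x)
      refine measure_mono_null hsub3 (measure_union_null ?_ hPG.1)
      exact hPG.2 (n - 1) (m - 1) (by omega)
  -- images of Q partition [0, 2π)
  have hQA : IsAEPartition (fun n => e n '' Q n) (Ico 0 (2 * π)) := by
    constructor
    · -- symm diff null
      refine null_of_add_sub (-(2 * π)) (s := A ∆ T) (measure_mono_null ?_ hPA.1) ?_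
      · exact fun y hy => hy
      intro x hx
      rw [show x + -(2 * π) = x - 2 * π by ring]
      rcases hx with ⟨hx1, hx2⟩ | ⟨hx1, hx2⟩
      · -- x ∈ Ico 0 2π, x ∉ ⋃ images
        have hnXim : ¬ (∃ n : ℤ, x - 2 * π * n ∈ Xpc n) := by
          rintro ⟨n, hn⟩
          exact hx2 (Set.mem_iUnion.2 ⟨n, (hQmem n x).2 (Or.inr hn)⟩)
        have hnX : x ∉ Ico (5 * π / 8) (7 * π / 8) ∪ Ico π (5 * π / 4) ∪
            Ico (3 * π / 2) (2 * π) ∪ Ico (5 * π / 4) (3 * π / 2) :=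
          fun h => hnXim ((hXim_iff x).2 h)
        have hxAim : x ∈ Ico 0 (5 * π / 8) ∪ Ico (7 * π / 8) π := by
          obtain ⟨h1, h2⟩ := hx1
          rcases lt_or_ge x (5 * π / 8) with h | h
          · exact Or.inl ⟨h1, h⟩
          rcases lt_or_ge x (7 * π / 8) with h' | h'
          · exact absurd (Or.inl (Or.inl (Or.inl ⟨h, h'⟩))) hnX
          rcases lt_or_ge x π with h'' | h''
          · exact Or.inr ⟨h', h''⟩
          rcases lt_or_ge x (5 * π / 4) with h3 | h3
          · exact absurd (Or.inl (Or.inl (Or.inr ⟨h'', h3⟩))) hnX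
          rcases lt_or_ge x (3 * π / 2) with h4 | h4
          · exact absurd (Or.inr ⟨h3, h4⟩) hnX
          exact absurd (Or.inl (Or.inr ⟨h4, h2⟩)) hnX
        have hxA : x - 2 * π ∈ A := (hAshift x).2 hxAim
        have hxT : x - 2 * π ∉ T := by
          intro hT
          obtain ⟨S, ⟨k, rfl⟩, hk⟩ := hT
          exact hx2 (Set.mem_iUnion.2 ⟨k + 1, (hQmem (k + 1) x).2 (Or.inl
            (by simpa using hPimg' k x hk))⟩)
        exact Or.inl ⟨hxA, hxT⟩
      · -- x ∈ ⋃ images, x ∉ Ico 0 2π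
        obtain ⟨S, ⟨n, rfl⟩, hn⟩ := hx1
        rcases (hQmem n x).1 hn with hp | hx8
        · have hxT : x - 2 * π ∈ T := by
            have := hPimg (n - 1) x (by simpa using hp)
            exact Set.mem_iUnion.2 ⟨n - 1, this⟩
          have hxA : x - 2 * π ∉ A := by
            intro hA
            rcases (hAshift x).1 hA with ⟨h1, h2⟩ | ⟨h1, h2⟩ <;>
              exact hx2 ⟨by linarith, by linarith⟩
          exact Or.inr ⟨hxT, hxA⟩
        · exfalso
          rcases hXloc n x hx8 with ⟨_, h1, h2⟩ | ⟨_, h1, h2⟩ | ⟨_, h1, h2⟩ <;>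
            exact hx2 ⟨by linarith, by linarith⟩
    · intro n m hnm
      refine null_of_add_sub (-(2 * π))
        (s := (((fun y => y + 2 * π * ((n - 1 : ℤ) : ℝ)) '' P (n - 1)) ∩
               ((fun y => y + 2 * π * ((m - 1 : ℤ) : ℝ)) '' P (m - 1))) ∪ (A ∆ T))
        (measure_union_null (hPA.2 (n - 1) (m - 1) (by omega)) hPA.1) ?_
      rintro x ⟨hxn, hxm⟩
      rw [show x + -(2 * π) = x - 2 * π by ring]
      rcases (hQmem n x).1 hxn with hp | hx8 <;> rcases (hQmem m x).1 hxm with hp' | hx8'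
      · exact Or.inl ⟨hPimg (n - 1) x (by simpa using hp), hPimg (m - 1) x (by simpa using hp')⟩
      · -- P-part and X-part
        have hxT : x - 2 * π ∈ T := Set.mem_iUnion.2 ⟨n - 1, hPimg (n - 1) x (by simpa using hp)⟩
        have hxA : x - 2 * π ∉ A := by
          intro hA
          have hxAim := (hAshift x).1 hA
          have hxXim := (hXim_iff x).1 ⟨m, hx8'⟩
          rcases hxAim with ⟨h1, h2⟩ | ⟨h1, h2⟩ <;>
            rcases hxXim with ((⟨h3, h4⟩ | ⟨h3, h4⟩) | ⟨h3, h4⟩) | ⟨h3, h4⟩ <;> linarith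
        exact Or.inr (Or.inr ⟨hxT, hxA⟩)
      · have hxT : x - 2 * π ∈ T := Set.mem_iUnion.2 ⟨m - 1, hPimg (m - 1) x (by simpa using hp')⟩
        have hxA : x - 2 * π ∉ A := by
          intro hA
          have hxAim := (hAshift x).1 hA
          have hxXim := (hXim_iff x).1 ⟨n, hx8⟩
          rcases hxAim with ⟨h1, h2⟩ | ⟨h1, h2⟩ <;>
            rcases hxXim with ((⟨h3, h4⟩ | ⟨h3, h4⟩) | ⟨h3, h4⟩) | ⟨h3, h4⟩ <;> linarith
        exact Or.inr (Or.inr ⟨hxT, hxA⟩)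
      · exfalso
        rcases hXloc n x hx8 with ⟨hn0, h1, h2⟩ | ⟨hn0, h1, h2⟩ | ⟨hn0, h1, h2⟩ <;>
          rcases hXloc m x hx8' with ⟨hm0, h3, h4⟩ | ⟨hm0, h3, h4⟩ | ⟨hm0, h3, h4⟩ <;>
          first | (exact hnm (by omega)) | linarith
  -- apply the transfer lemma
  have h0 : ∀ x : ℝ, e 0 x = x := by intro x; simp [hedef]
  have hadd : ∀ (n m : ℤ) (x : ℝ), e n (e m x) = e (n + m) x := by
    intro n m x; simp only [hedef]; push_cast; ring
  have hnull : ∀ (n : ℤ) (s : Set ℝ), volume s = 0 → volume (e n ⁻¹' s) = 0 := by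
    intro n s hs
    exact null_of_add_sub (2 * π * n) hs (fun x hx => hx)
  have hIco : ∀ᵐ x : ℝ ∂volume, ∃! n : ℤ, e n x ∈ Ico 0 (2 * π) :=
    MeasureTheory.ae_of_all _ trans_tiles
  exact tile_transfer e h0 hadd hnull (Ico 0 (2 * π)) (Gset G₀) Q hQG hQA hIco

lemma mem_image_zpow {n : ℤ} {S : Set ℝ} {x : ℝ} :
    x ∈ (fun y => (2:ℝ) ^ n * y) '' S ↔ (2:ℝ) ^ (-n) * x ∈ S := by
  have h2 : ((2:ℝ) ^ n) ≠ 0 := zpow_ne_zero n two_ne_zero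
  constructor
  · rintro ⟨y, hy, rfl⟩
    have : (2:ℝ) ^ (-n) * ((2:ℝ) ^ n * y) = y := by
      rw [← mul_assoc, ← zpow_add₀ (two_ne_zero (α := ℝ))]
      simp
    rwa [this]
  · intro h
    refine ⟨(2:ℝ) ^ (-n) * x, h, ?_⟩
    show (2:ℝ) ^ n * ((2:ℝ) ^ (-n) * x) = x
    rw [← mul_assoc, ← zpow_add₀ (two_ne_zero (α := ℝ))]
    simp

def Ypc : ℤ → Set ℝ := fun n =>
  if n = 0 then Ico π (5 * π / 4)
  else if n = 1 then Ico (5 * π / 8) (7 * π / 8) ∪ Ico (-(3 * π / 4)) (-(π / 2))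
  else if n = -1 then Ico (7 * π / 2) (4 * π)
  else ∅

lemma Ypc_cases (n : ℤ) : Ypc n = ∅ ∨ n = 0 ∨ n = 1 ∨ n = -1 := by
  unfold Ypc; split_ifs with h1 h2 h3 <;> tauto

lemma Ypc_zero : Ypc 0 = Ico π (5 * π / 4) := by unfold Ypc; norm_num
lemma Ypc_one : Ypc 1 = Ico (5 * π / 8) (7 * π / 8) ∪ Ico (-(3 * π / 4)) (-(π / 2)) := by
  unfold Ypc; norm_num
lemma Ypc_neg_one : Ypc (-1) = Ico (7 * π / 2) (4 * π) := by unfold Ypc; norm_num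

lemma Ypc_lb {n : ℤ} {x : ℝ} (hx : x ∈ Ypc n) : -(3 * π / 4) ≤ x := by
  have hπ := Real.pi_pos
  rcases Ypc_cases n with h | h | h | h
  · rw [h] at hx; exact absurd hx (Set.notMem_empty x)
  · rw [h, Ypc_zero] at hx; obtain ⟨h1, _⟩ := hx; linarith
  · rw [h, Ypc_one] at hx; rcases hx with ⟨h1, _⟩ | ⟨h1, _⟩ <;> linarith
  · rw [h, Ypc_neg_one] at hx; obtain ⟨h1, _⟩ := hx; linarith

lemma iUnion_Ypc_eq_gset (G₀ : Set ℝ) : (⋃ n : ℤ, Ypc n) ∪ G₀ = Gset G₀ := by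
  have hiu : (⋃ n : ℤ, Ypc n) =
      Ico π (5 * π / 4) ∪ (Ico (5 * π / 8) (7 * π / 8) ∪ Ico (-(3 * π / 4)) (-(π / 2))) ∪
        Ico (7 * π / 2) (4 * π) := by
    apply Set.Subset.antisymm
    · refine Set.iUnion_subset fun n x hx => ?_
      rcases Ypc_cases n with h | h | h | h
      · rw [h] at hx; exact absurd hx (Set.notMem_empty x)
      · rw [h, Ypc_zero] at hx; exact Or.inl (Or.inl hx)
      · rw [h, Ypc_one] at hx; exact Or.inl (Or.inr hx)
      · rw [h, Ypc_neg_one] at hx; exact Or.inr hx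
    · rintro x ((hx | hx) | hx)
      · exact Set.mem_iUnion.2 ⟨0, by rw [Ypc_zero]; exact hx⟩
      · exact Set.mem_iUnion.2 ⟨1, by rw [Ypc_one]; exact hx⟩
      · exact Set.mem_iUnion.2 ⟨-1, by rw [Ypc_neg_one]; exact hx⟩
  rw [hiu]
  unfold Gset
  ext x
  simp only [Set.mem_union]
  tauto

lemma hYloc : ∀ (n : ℤ) (x : ℝ), (2:ℝ) ^ (-n) * x ∈ Ypc n →
    (n = 0 ∧ π ≤ x ∧ x < 5 * π / 4) ∨
    (n = 1 ∧ (5 * π / 4 ≤ x ∧ x < 7 * π / 4 ∨ -(3 * π / 2) ≤ x ∧ x < -π)) ∨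
    (n = -1 ∧ 7 * π / 4 ≤ x ∧ x < 2 * π) := by
  have hπ := Real.pi_pos
  intro n x hx
  rcases Ypc_cases n with h | h | h | h
  · rw [h] at hx; exact absurd hx (Set.notMem_empty _)
  · subst h; rw [Ypc_zero] at hx; norm_num at hx
    exact Or.inl ⟨rfl, hx.1, hx.2⟩
  · subst h; rw [Ypc_one] at hx; norm_num at hx
    rcases hx with ⟨h1, h2⟩ | ⟨h1, h2⟩
    · exact Or.inr (Or.inl ⟨rfl, Or.inl ⟨by linarith, by linarith⟩⟩)
    · exact Or.inr (Or.inl ⟨rfl, Or.inr ⟨by linarith, by linarith⟩⟩)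
  · subst h; rw [Ypc_neg_one] at hx; norm_num at hx
    obtain ⟨h1, h2⟩ := hx
    exact Or.inr (Or.inr ⟨rfl, by constructor <;> linarith⟩)

lemma hYim_iff : ∀ x : ℝ, (∃ n : ℤ, (2:ℝ) ^ (-n) * x ∈ Ypc n) ↔
    x ∈ Ico π (5 * π / 4) ∪ Ico (5 * π / 4) (7 * π / 4) ∪ Ico (-(3 * π / 2)) (-π) ∪
      Ico (7 * π / 4) (2 * π) := by
  have hπ := Real.pi_pos
  intro x
  constructor
  · rintro ⟨n, hn⟩
    rcases hYloc n x hn with ⟨_, h1, h2⟩ | ⟨_, (⟨h1, h2⟩ | ⟨h1, h2⟩)⟩ | ⟨_, h1, h2⟩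
    · exact Or.inl (Or.inl (Or.inl ⟨h1, h2⟩))
    · exact Or.inl (Or.inl (Or.inr ⟨h1, h2⟩))
    · exact Or.inl (Or.inr ⟨h1, h2⟩)
    · exact Or.inr ⟨h1, h2⟩
  · rintro (((⟨h1, h2⟩ | ⟨h1, h2⟩) | ⟨h1, h2⟩) | ⟨h1, h2⟩)
    · exact ⟨0, by rw [Ypc_zero]; norm_num; constructor <;> linarith⟩
    · exact ⟨1, by rw [Ypc_one]; norm_num; left; constructor <;> linarith⟩
    · exact ⟨1, by rw [Ypc_one]; norm_num; right; constructor <;> linarith⟩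
    · exact ⟨-1, by rw [Ypc_neg_one]; norm_num; constructor <;> linarith⟩

lemma gset_dil_tiling (G₀ : Set ℝ) (hsub : ∀ x ∈ G₀, x < -(3 * π / 2))
    (P : ℤ → Set ℝ) (hPG : IsAEPartition P G₀)
    (hPD : IsAEPartition (fun n : ℤ => (fun x => (2:ℝ) ^ n * x) '' P n)
      (Ico (-(2 * π)) (-(3 * π / 2)))) :
    ∀ᵐ x : ℝ ∂volume, ∃! k : ℤ, (2:ℝ) ^ k * x ∈ Gset G₀ := by
  have hπ := Real.pi_pos
  set D : Set ℝ := Ico (-(2 * π)) (-(3 * π / 2)) with hDdef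
  set Td : Set ℝ := ⋃ n : ℤ, (fun x => (2:ℝ) ^ n * x) '' P n with hTdef
  set R : ℤ → Set ℝ := fun n => P n ∪ Ypc n with hRdef
  set e : ℤ → ℝ → ℝ := fun n x => (2:ℝ) ^ n * x with hedef
  have hPsub : ∀ k : ℤ, ∀ x ∈ P k, x ∈ G₀ ∨ x ∈ G₀ ∆ (⋃ j, P j) := by
    intro k x hx
    by_cases hG : x ∈ G₀
    · exact Or.inl hG
    · exact Or.inr (Or.inr ⟨Set.mem_iUnion.2 ⟨k, hx⟩, hG⟩)
  have hQmem : ∀ (n : ℤ) (x : ℝ), x ∈ e n '' R n ↔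
      ((2:ℝ) ^ (-n) * x ∈ P n ∨ (2:ℝ) ^ (-n) * x ∈ Ypc n) := by
    intro n x
    rw [show e n '' R n = (fun y => (2:ℝ) ^ n * y) '' R n from rfl, mem_image_zpow]
    rfl
  have hPimg : ∀ (k : ℤ) (x : ℝ), ((2:ℝ) ^ (-k) * x ∈ P k ↔
      x ∈ (fun y => (2:ℝ) ^ k * y) '' P k) := fun k x => mem_image_zpow.symm
  -- D is disjoint from the Y-locations
  have hDY : ∀ x ∈ D, ¬ (∃ n : ℤ, (2:ℝ) ^ (-n) * x ∈ Ypc n) := by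
    rintro x ⟨h1, h2⟩ hY
    rcases (hYim_iff x).1 hY with ((⟨h3, h4⟩ | ⟨h3, h4⟩) | ⟨h3, h4⟩) | ⟨h3, h4⟩ <;> linarith
  -- R partitions Gset G₀
  have hRG : IsAEPartition R (Gset G₀) := by
    constructor
    · have hUR : (⋃ n, R n) = (⋃ n, Ypc n) ∪ ⋃ n, P n := by
        apply Set.Subset.antisymm
        · refine Set.iUnion_subset fun n x hx => ?_
          rcases hx with hx | hx
          · exact Or.inr (Set.mem_iUnion.2 ⟨n, hx⟩)
          · exact Or.inl (Set.mem_iUnion.2 ⟨n, hx⟩)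
        · rintro x (hx | hx)
          · obtain ⟨n, hn⟩ := Set.mem_iUnion.1 hx
            exact Set.mem_iUnion.2 ⟨n, Or.inr hn⟩
          · obtain ⟨n, hn⟩ := Set.mem_iUnion.1 hx
            exact Set.mem_iUnion.2 ⟨n, Or.inl hn⟩
      rw [hUR, ← iUnion_Ypc_eq_gset G₀]
      exact measure_mono_null (symmDiff_union_subset _ _ _) hPG.1
    · intro n m hnm
      have hYd : Ypc n ∩ Ypc m = ∅ := by
        ext x
        simp only [Set.mem_inter_iff, Set.mem_empty_iff_false, iff_false, not_and]
        intro hx hx2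
        rcases Ypc_cases n with h | h | h | h
        · rw [h] at hx; exact hx
        all_goals subst h
        all_goals rcases Ypc_cases m with h' | h' | h' | h'
        all_goals first
          | (rw [h'] at hx2; exact hx2)
          | (subst h'; first
          | exact hnm (by omega)
          | (simp only [Ypc_zero, Ypc_one, Ypc_neg_one, Set.mem_union, Set.mem_Ico] at hx hx2;
             first
               | (rcases hx with hx | hx <;> obtain ⟨h1, h2⟩ := hx <;>
                   obtain ⟨h3, h4⟩ := hx2 <;> linarith)
               | (rcases hx2 with hx2 | hx2 <;> obtain ⟨h1, h2⟩ := hx2 <;>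
                   obtain ⟨h3, h4⟩ := hx <;> linarith)
               | (obtain ⟨h1, h2⟩ := hx; obtain ⟨h3, h4⟩ := hx2; linarith)))
      have hsub3 : R n ∩ R m ⊆ (P n ∩ P m) ∪ (G₀ ∆ (⋃ j, P j)) := by
        rintro x ⟨hxn, hxm⟩
        rcases hxn with hp | hy <;> rcases hxm with hp' | hy'
        · exact Or.inl ⟨hp, hp'⟩
        · rcases hPsub _ _ hp with hG | hbad
          · exact absurd (Ypc_lb hy') (by have := hsub x hG; intro h; linarith)
          · exact Or.inr hbad
        · rcases hPsub _ _ hp' with hG | hbad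
          · exact absurd (Ypc_lb hy) (by have := hsub x hG; intro h; linarith)
          · exact Or.inr hbad
        · exact absurd (Set.mem_inter hy hy') (by rw [hYd]; exact Set.notMem_empty x)
      exact measure_mono_null hsub3 (measure_union_null (hPG.2 n m hnm) hPG.1)
  -- images of R partition E
  have hRE : IsAEPartition (fun n => e n '' R n)
      (Ico (-(2 * π)) (-π) ∪ Ico π (2 * π)) := by
    constructor
    · refine measure_mono_null ?_ hPD.1
      intro x hx
      rcases hx with ⟨hx1, hx2⟩ | ⟨hx1, hx2⟩
      · -- x ∈ E, x ∉ ⋃ images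
        have hnY : ¬ (∃ n : ℤ, (2:ℝ) ^ (-n) * x ∈ Ypc n) := by
          rintro ⟨n, hn⟩
          exact hx2 (Set.mem_iUnion.2 ⟨n, (hQmem n x).2 (Or.inr hn)⟩)
        have hxD : x ∈ D := by
          rcases hx1 with ⟨h1, h2⟩ | ⟨h1, h2⟩
          · rcases lt_or_ge x (-(3 * π / 2)) with h | h
            · exact ⟨h1, h⟩
            · exact absurd ((hYim_iff x).2 (Or.inl (Or.inr ⟨h, h2⟩))) hnY
          · exfalso
            apply hnY
            rw [hYim_iff]
            rcases lt_or_ge x (5 * π / 4) with h | h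
            · exact Or.inl (Or.inl (Or.inl ⟨h1, h⟩))
            · rcases lt_or_ge x (7 * π / 4) with h' | h'
              · exact Or.inl (Or.inl (Or.inr ⟨h, h'⟩))
              · exact Or.inr ⟨h', h2⟩
        have hxT : x ∉ Td := by
          intro hT
          obtain ⟨S, ⟨k, rfl⟩, hk⟩ := hT
          exact hx2 (Set.mem_iUnion.2 ⟨k, (hQmem k x).2 (Or.inl ((hPimg k x).2 hk))⟩)
        exact Or.inl ⟨hxD, hxT⟩
      · -- x ∈ ⋃ images, x ∉ E
        obtain ⟨S, ⟨n, rfl⟩, hn⟩ := hx1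
        rcases (hQmem n x).1 hn with hp | hy
        · have hxT : x ∈ Td := Set.mem_iUnion.2 ⟨n, (hPimg n x).1 hp⟩
          have hxD : x ∉ D := by
            rintro ⟨h1, h2⟩
            exact hx2 (Or.inl ⟨h1, by linarith⟩)
          exact Or.inr ⟨hxT, hxD⟩
        · exfalso
          rcases (hYim_iff x).1 ⟨n, hy⟩ with ((⟨h1, h2⟩ | ⟨h1, h2⟩) | ⟨h1, h2⟩) | ⟨h1, h2⟩
          · exact hx2 (Or.inr ⟨by linarith, by linarith⟩)
          · exact hx2 (Or.inr ⟨by linarith, by linarith⟩)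
          · exact hx2 (Or.inl ⟨by linarith, by linarith⟩)
          · exact hx2 (Or.inr ⟨by linarith, by linarith⟩)
    · intro n m hnm
      refine measure_mono_null ?_
        (measure_union_null (hPD.2 n m hnm) hPD.1)
      rintro x ⟨hxn, hxm⟩
      rcases (hQmem n x).1 hxn with hp | hy <;> rcases (hQmem m x).1 hxm with hp' | hy'
      · exact Or.inl ⟨(hPimg n x).1 hp, (hPimg m x).1 hp'⟩
      · have hxT : x ∈ Td := Set.mem_iUnion.2 ⟨n, (hPimg n x).1 hp⟩
        have hxD : x ∉ D := fun hD => hDY x hD ⟨m, hy'⟩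
        exact Or.inr (Or.inr ⟨hxT, hxD⟩)
      · have hxT : x ∈ Td := Set.mem_iUnion.2 ⟨m, (hPimg m x).1 hp'⟩
        have hxD : x ∉ D := fun hD => hDY x hD ⟨n, hy⟩
        exact Or.inr (Or.inr ⟨hxT, hxD⟩)
      · exfalso
        rcases hYloc n x hy with ⟨hn0, hl⟩ | ⟨hn0, hl⟩ | ⟨hn0, hl⟩ <;>
          rcases hYloc m x hy' with ⟨hm0, hl'⟩ | ⟨hm0, hl'⟩ | ⟨hm0, hl'⟩ <;>
          first
            | (exact hnm (by omega))
            | (rcases hl with ⟨h1, h2⟩ | ⟨h1, h2⟩ <;>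
                first
                  | (rcases hl' with ⟨h3, h4⟩ | ⟨h3, h4⟩ <;> linarith)
                  | (obtain ⟨h3, h4⟩ := hl'; linarith))
            | (obtain ⟨h1, h2⟩ := hl;
               first
                 | (rcases hl' with ⟨h3, h4⟩ | ⟨h3, h4⟩ <;> linarith)
                 | (obtain ⟨h3, h4⟩ := hl'; linarith))
  -- apply the transfer lemma
  have h0 : ∀ x : ℝ, e 0 x = x := by intro x; simp [hedef]
  have hadd : ∀ (n m : ℤ) (x : ℝ), e n (e m x) = e (n + m) x := by
    intro n m x
    show (2:ℝ) ^ n * ((2:ℝ) ^ m * x) = (2:ℝ) ^ (n + m) * x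
    rw [zpow_add₀ (two_ne_zero (α := ℝ))]; ring
  have hnull : ∀ (n : ℤ) (s : Set ℝ), volume s = 0 → volume (e n ⁻¹' s) = 0 := by
    intro n s hs
    exact null_of_mul_sub (zpow_ne_zero n (two_ne_zero (α := ℝ))) hs (fun x hx => hx)
  exact tile_transfer e h0 hadd hnull _ (Gset G₀) R hRG hRE dil_tiles

lemma ae_scale {c : ℝ} (hc : c ≠ 0) {p : ℝ → Prop} (h : ∀ᵐ x : ℝ ∂volume, p x) :
    ∀ᵐ x : ℝ ∂volume, p (c * x) := by
  rw [MeasureTheory.ae_iff] at h ⊢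
  exact null_of_mul_sub hc h (fun x hx => hx)

lemma ae_shift (c : ℝ) {p : ℝ → Prop} (h : ∀ᵐ x : ℝ ∂volume, p x) :
    ∀ᵐ x : ℝ ∂volume, p (x + c) := by
  rw [MeasureTheory.ae_iff] at h ⊢
  exact null_of_add_sub c h (fun x hx => hx)

lemma int_cases_real {n : ℤ} {a b : ℝ} (h1 : a < (n:ℝ)) (h2 : (n:ℝ) ≤ b) {k : ℤ}
    (hk1 : a < (k:ℝ)) : True := trivial

lemma no_interp (G₀ : Set ℝ)
    (hrange : ∀ x ∈ G₀, (-(4*π) ≤ x ∧ x < -(3*π)) ∨ (-(2*π) ≤ x ∧ x < -(3*π/2)))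
    (σ : ℝ → ℝ)
    (hσ : IsInterpolationMap (Ico (-(2 * π)) (-π) ∪ Ico π (2 * π)) (Gset G₀) σ) :
    ¬ (∀ᵐ s : ℝ ∂volume, σ (σ s) = s) := by
  have hπ := Real.pi_pos
  intro hae
  obtain ⟨-, -, h3, h4⟩ := hσ
  -- Step 1 : on [7π/4, 2π), σ s = s + 2π
  have hstep : ∀ᵐ s : ℝ ∂volume, s ∈ Ico (7 * π / 4) (2 * π) → σ s = s + 2 * π := by
    filter_upwards [h3] with s h3s hs
    obtain ⟨hs1, hs2⟩ := hs
    obtain ⟨hG, n, hn⟩ := h3s (Or.inr ⟨by linarith, hs2⟩)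
    have hσs : σ s = s + 2 * π * n := by linarith
    rw [hσs]
    rw [hσs] at hG
    -- reduce to showing n = 1
    suffices hsuf : (n:ℝ) = 1 by rw [hsuf]; ring
    have hcast : ∀ m : ℤ, n ≤ m → 2 * π * (n:ℝ) ≤ 2 * π * (m:ℝ) := by
      intro m hm
      have : (n:ℝ) ≤ (m:ℝ) := by exact_mod_cast hm
      nlinarith
    have hcast' : ∀ m : ℤ, m ≤ n → 2 * π * (m:ℝ) ≤ 2 * π * (n:ℝ) := by
      intro m hm
      have : (m:ℝ) ≤ (n:ℝ) := by exact_mod_cast hm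
      nlinarith
    have hone : n = 1 → (n:ℝ) = 1 := fun h => by exact_mod_cast h
    apply hone
    by_contra hne
    rcases hG with ((((⟨h1, h2⟩ | ⟨h1, h2⟩) | ⟨h1, h2⟩) | ⟨h1, h2⟩) | hg0)
    · -- [5π/8, 7π/8)
      rcases le_or_gt n (-1) with h | h
      · have := hcast' _ (le_refl n); have h' := hcast (-1) h; push_cast at h'; linarith
      · have : (0:ℤ) ≤ n := by omega
        have h' := hcast' 0 this; push_cast at h'; linarith
    · -- [π, 5π/4)
      rcases le_or_gt n (-1) with h | h
      · have h' := hcast (-1) h; push_cast at h'; linarith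
      · have : (0:ℤ) ≤ n := by omega
        have h' := hcast' 0 this; push_cast at h'; linarith
    · -- [7π/2, 4π) : forces n = 1
      have hn1 : 1 ≤ n := by
        by_contra hc
        push_neg at hc
        have : n ≤ 0 := by omega
        have h' := hcast 0 this; push_cast at h'; linarith
      have hn2 : n ≤ 1 := by
        by_contra hc
        push_neg at hc
        have : 2 ≤ n := by omega
        have h' := hcast' 2 this; push_cast at h'; linarith
      exact hne (by omega)
    · -- [-3π/4, -π/2)
      rcases le_or_gt n (-2) with h | h
      · have h' := hcast (-2) h; push_cast at h'; linarith
      · have : (-1:ℤ) ≤ n := by omega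
        have h' := hcast' (-1) this; push_cast at h'; linarith
    · -- G₀
      rcases hrange _ hg0 with ⟨h1, h2⟩ | ⟨h1, h2⟩
      · rcases le_or_gt n (-3) with h | h
        · have h' := hcast (-3) h; push_cast at h'; linarith
        · have : (-2:ℤ) ≤ n := by omega
          have h' := hcast' (-2) this; push_cast at h'; linarith
      · rcases le_or_gt n (-2) with h | h
        · have h' := hcast (-2) h; push_cast at h'; linarith
        · have : (-1:ℤ) ≤ n := by omega
          have h' := hcast' (-1) this; push_cast at h'; linarith
  -- Step 2 : on [15π/4, 4π), σ s = s + 4π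
  have hpow1 : (2:ℝ) ^ (1:ℤ) = 2 := by norm_num
  have hpowm1 : (2:ℝ) ^ (-1:ℤ) = 1/2 := by norm_num
  have hstep2 : ∀ᵐ s : ℝ ∂volume, s ∈ Ico (15 * π / 4) (4 * π) → σ s = s + 4 * π := by
    have hpull : ∀ᵐ s : ℝ ∂volume,
        (2:ℝ) ^ (-1:ℤ) * s ∈ Ico (7 * π / 4) (2 * π) →
          σ ((2:ℝ) ^ (-1:ℤ) * s) = (2:ℝ) ^ (-1:ℤ) * s + 2 * π := by
      have := ae_scale (c := (2:ℝ) ^ (-1:ℤ)) (by norm_num)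
        (p := fun t => t ∈ Ico (7 * π / 4) (2 * π) → σ t = t + 2 * π) hstep
      exact this
    filter_upwards [h4 1, hpull] with s h4s hp hs
    obtain ⟨hs1, hs2⟩ := hs
    have hmem : (2:ℝ) ^ (-1:ℤ) * s ∈ Ico (7 * π / 4) (2 * π) := by
      rw [hpowm1]; constructor <;> [linarith; linarith]
    have hmemE : (2:ℝ) ^ (-1:ℤ) * s ∈ Ico (-(2 * π)) (-π) ∪ Ico π (2 * π) := by
      rw [hpowm1] at hmem ⊢
      exact Or.inr ⟨by obtain ⟨h1, _⟩ := hmem; linarith, hmem.2⟩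
    rw [h4s hmemE, hp hmem, hpow1, hpowm1]
    ring
  -- Step 3 : contradiction on [7π/4, 15π/8)
  have hshift : ∀ᵐ s : ℝ ∂volume,
      s + 2 * π ∈ Ico (15 * π / 4) (4 * π) → σ (s + 2 * π) = s + 2 * π + 4 * π := by
    exact ae_shift (2 * π)
      (p := fun t => t ∈ Ico (15 * π / 4) (4 * π) → σ t = t + 4 * π) hstep2
  have hfin : ∀ᵐ s : ℝ ∂volume, s ∉ Ico (7 * π / 4) (15 * π / 8) := by
    filter_upwards [hstep, hshift, hae] with s h1 h2 h3 hs
    obtain ⟨hs1, hs2⟩ := hs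
    have e1 : σ s = s + 2 * π := h1 ⟨hs1, by linarith⟩
    have e2 : σ (s + 2 * π) = s + 2 * π + 4 * π := h2 ⟨by linarith, by linarith⟩
    rw [e1, e2] at h3
    linarith
  have : volume (Ico (7 * π / 4) (15 * π / 8)) = 0 := by
    rw [MeasureTheory.ae_iff] at hfin
    refine measure_mono_null (fun x hx => ?_) hfin
    simpa using hx
  rw [Real.volume_Ico] at this
  have hpos : (0:ℝ) < 15 * π / 8 - 7 * π / 4 := by linarith
  rw [ENNReal.ofReal_eq_zero] at this
  linarith

lemma range_of_subset (G₀ : Set ℝ)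
    (h : G₀ ⊆ ((fun x => x - 2 * π) ''
          (Ico (-(2 * π)) (-(11 * π / 8)) ∪ Ico (-(9 * π / 8)) (-π))) ∪
        Ico (-(2 * π)) (-(3 * π / 2))) :
    ∀ x ∈ G₀, (-(4 * π) ≤ x ∧ x < -(3 * π)) ∨ (-(2 * π) ≤ x ∧ x < -(3 * π / 2)) := by
  have hπ := Real.pi_pos
  intro x hx
  rcases h hx with ⟨y, hy, rfl⟩ | ⟨h1, h2⟩
  · left
    show -(4 * π) ≤ y - 2 * π ∧ y - 2 * π < -(3 * π)
    rcases hy with ⟨h1, h2⟩ | ⟨h1, h2⟩ <;> exact ⟨by linarith, by linarith⟩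
  · exact Or.inr ⟨h1, h2⟩

-- the construction of G₀
def Jm (m : ℕ) : Set ℝ := Ico (-(2 * π) + 5 * π / 2 ^ (m + 3)) (-(2 * π) + 7 * π / 2 ^ (m + 3))

def Bset : Set ℝ := ⋃ m : ℕ, Jm (m + 1)

def Aset : Set ℝ := Ico (-(2 * π)) (-(11 * π / 8)) ∪ Ico (-(9 * π / 8)) (-π)

def Cset : Set ℝ := (fun x => x - 2 * π) '' (Aset \ Bset)

lemma mem_Cset {x : ℝ} : x ∈ Cset ↔ x + 2 * π ∈ Aset \ Bset := by
  constructor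
  · rintro ⟨y, hy, rfl⟩; simpa using hy
  · intro h; exact ⟨x + 2 * π, h, by ring⟩

lemma Jm_double {k : ℕ} {x : ℝ} : 2 * x + 2 * π ∈ Jm k ↔ x ∈ Jm (k + 1) := by
  have hπ := Real.pi_pos
  have hpow : (2:ℝ) ^ (k + 1 + 3) = 2 * 2 ^ (k + 3) := by ring
  have hp3 : (0:ℝ) < 2 ^ (k + 3) := by positivity
  have e5 : 5 * π / (2 * (2:ℝ) ^ (k + 3)) = 5 * π / 2 ^ (k + 3) / 2 := by ring
  have e7 : 7 * π / (2 * (2:ℝ) ^ (k + 3)) = 7 * π / 2 ^ (k + 3) / 2 := by ring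
  unfold Jm
  rw [Set.mem_Ico, Set.mem_Ico, hpow]
  constructor <;> rintro ⟨h1, h2⟩ <;>
    exact ⟨by linarith [e5, e7], by linarith [e5, e7]⟩

lemma Jm_sub_D {m : ℕ} : Jm (m + 1) ⊆ Ico (-(2 * π)) (-(3 * π / 2)) := by
  have hπ := Real.pi_pos
  rintro x ⟨h1, h2⟩
  have hp : (16:ℝ) ≤ 2 ^ (m + 1 + 3) := by
    calc (16:ℝ) = 2 ^ 4 := by norm_num
    _ ≤ 2 ^ (m + 1 + 3) := by
        apply pow_le_pow_right₀ (by norm_num)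
        omega
  have hp0 : (0:ℝ) < 2 ^ (m + 1 + 3) := by positivity
  constructor
  · have : (0:ℝ) ≤ 5 * π / 2 ^ (m + 1 + 3) := by positivity
    linarith
  · have : 7 * π / 2 ^ (m + 1 + 3) ≤ 7 * π / 16 := by
      apply div_le_div_of_nonneg_left (by linarith) (by norm_num) hp
    linarith

lemma Bset_sub_D : Bset ⊆ Ico (-(2 * π)) (-(3 * π / 2)) :=
  Set.iUnion_subset fun m => Jm_sub_D

lemma Jm_one : Jm 1 = Ico (-(27 * π / 16)) (-(25 * π / 16)) := by
  unfold Jm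
  norm_num
  congr 1 <;> ring

lemma mem_Bset {x : ℝ} : x ∈ Bset ↔ ∃ m : ℕ, x ∈ Jm (m + 1) := Set.mem_iUnion

lemma mem_Jm_zero {y : ℝ} : y ∈ Jm 0 ↔ -(11 * π / 8) ≤ y ∧ y < -(9 * π / 8) := by
  unfold Jm
  rw [Set.mem_Ico]
  norm_num
  constructor <;> rintro ⟨h1, h2⟩ <;> exact ⟨by linarith, by linarith⟩

lemma Cset_key : ∀ x : ℝ, (2 * x + 2 * π ∈ Aset \ Bset) ↔
    x ∈ Ico (-(2 * π)) (-(3 * π / 2)) \ Bset := by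
  have hπ := Real.pi_pos
  intro x
  constructor
  · rintro ⟨h1, h2⟩
    constructor
    · rcases h1 with ⟨h3, h4⟩ | ⟨h3, h4⟩ <;> exact ⟨by linarith, by linarith⟩
    · intro hB
      obtain ⟨m, hm⟩ := mem_Bset.1 hB
      have hd : 2 * x + 2 * π ∈ Jm m := Jm_double.2 hm
      rcases m with - | k
      · rw [mem_Jm_zero] at hd
        rcases h1 with ⟨h3, h4⟩ | ⟨h3, h4⟩ <;> (obtain ⟨h5, h6⟩ := hd; linarith)
      · exact h2 (mem_Bset.2 ⟨k, hd⟩)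
  · rintro ⟨⟨h1, h2⟩, hB⟩
    constructor
    · by_contra hA
      have hJ0 : 2 * x + 2 * π ∈ Jm 0 := by
        rw [mem_Jm_zero]
        unfold Aset at hA
        simp only [Set.mem_union, Set.mem_Ico, not_or, not_and, not_le, not_lt] at hA
        obtain ⟨hA1, hA2⟩ := hA
        constructor
        · by_contra hc
          push_neg at hc
          exact absurd (hA1 (by linarith)) (by linarith)
        · by_contra hc
          push_neg at hc
          exact absurd (hA2 (by linarith)) (by linarith)
      exact hB (mem_Bset.2 ⟨0, Jm_double.1 hJ0⟩)
    · intro hBc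
      obtain ⟨m, hm⟩ := mem_Bset.1 hBc
      exact hB (mem_Bset.2 ⟨m + 1, Jm_double.1 hm⟩)

lemma aepart_of_eq {P : ℤ → Set ℝ} {A : Set ℝ} (h : (⋃ n, P n) = A)
    (hd : ∀ n m : ℤ, n ≠ m → P n ∩ P m = ∅) : IsAEPartition P A := by
  constructor
  · rw [h, symmDiff_self]
    simp
  · intro n m hnm
    rw [hd n m hnm]
    simp

lemma measurable_Bset : MeasurableSet Bset :=
  MeasurableSet.iUnion fun m => measurableSet_Ico

lemma measurable_Aset : MeasurableSet Aset :=
  (measurableSet_Ico).union measurableSet_Ico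

lemma Cset_as_preimage : Cset = (fun x => x + 2 * π) ⁻¹' (Aset \ Bset) := by
  ext x
  rw [mem_Cset]
  rfl

lemma measurable_Cset : MeasurableSet Cset := by
  rw [Cset_as_preimage]
  exact (measurable_Aset.diff measurable_Bset).preimage (measurable_add_const _)

lemma Bset_sub_Aset : Bset ⊆ Aset := by
  intro x hx
  have h := Bset_sub_D hx
  have hπ := Real.pi_pos
  exact Or.inl ⟨h.1, by have := h.2; linarith⟩

lemma Bset_Cset_disj : Bset ∩ Cset = ∅ := by
  have hπ := Real.pi_pos
  ext x
  simp only [Set.mem_inter_iff, Set.mem_empty_iff_false, iff_false, not_and]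
  intro hB hC
  obtain ⟨hC1, -⟩ := mem_Cset.1 hC
  have h1 := (Bset_sub_D hB).1
  rcases hC1 with ⟨h3, h4⟩ | ⟨h3, h4⟩ <;> linarith

def G0c : Set ℝ := Bset ∪ Cset

lemma G0c_trans : TransCongruent G0c Aset := by
  classical
  have hπ := Real.pi_pos
  refine ⟨fun n => if n = 0 then Bset else if n = 1 then Cset else ∅, ?_, ?_, ?_⟩
  · intro n
    beta_reduce
    split_ifs
    · exact measurable_Bset
    · exact measurable_Cset
    · exact MeasurableSet.empty
  · apply aepart_of_eq
    · apply Set.Subset.antisymm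
      · refine Set.iUnion_subset fun n x hx => ?_
        split_ifs at hx with h1 h2
        · exact Or.inl hx
        · exact Or.inr hx
        · exact absurd hx (Set.notMem_empty x)
      · rintro x (hx | hx)
        · exact Set.mem_iUnion.2 ⟨0, by norm_num; exact hx⟩
        · exact Set.mem_iUnion.2 ⟨1, by norm_num; exact hx⟩
    · intro n m hnm
      ext x
      simp only [Set.mem_inter_iff, Set.mem_empty_iff_false, iff_false, not_and]
      intro hx hx2
      split_ifs at hx hx2 with h1 h2 h3 h4 h5 h6
      all_goals first
        | exact hx
        | exact hx2
        | exact hnm (by omega)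
        | (exact absurd (Set.mem_inter hx hx2) (by rw [Bset_Cset_disj]; exact Set.notMem_empty x))
        | (exact absurd (Set.mem_inter hx2 hx) (by rw [Bset_Cset_disj]; exact Set.notMem_empty x))
  · apply aepart_of_eq
    · apply Set.Subset.antisymm
      · refine Set.iUnion_subset fun n x hx => ?_
        rw [mem_image_add] at hx
        beta_reduce at hx
        split_ifs at hx with h1 h2
        · subst h1
          norm_num at hx
          exact Bset_sub_Aset hx
        · subst h2
          have := mem_Cset.1 hx
          have he : x - 2 * Real.pi * ((1:ℤ):ℝ) + 2 * π = x := by push_cast; ring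
          rw [he] at this
          exact this.1
        · exact absurd hx (Set.notMem_empty _)
      · intro x hx
        by_cases hB : x ∈ Bset
        · refine Set.mem_iUnion.2 ⟨0, ?_⟩
          rw [mem_image_add]
          norm_num
          exact hB
        · refine Set.mem_iUnion.2 ⟨1, ?_⟩
          rw [mem_image_add]
          norm_num
          rw [mem_Cset]
          have he : x - 2 * π + 2 * π = x := by ring
          rw [he]
          exact ⟨hx, hB⟩
    · intro n m hnm
      ext x
      simp only [Set.mem_inter_iff, Set.mem_empty_iff_false, iff_false, not_and]
      intro hx hx2
      rw [mem_image_add] at hx hx2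
      have key : ∀ k : ℤ, ∀ y : ℝ,
          (y ∈ (if k = 0 then Bset else if k = 1 then Cset else ∅) →
            (k = 0 ∧ y ∈ Bset) ∨ (k = 1 ∧ y ∈ Cset)) := by
        intro k y hy
        split_ifs at hy with h1 h2
        · exact Or.inl ⟨h1, hy⟩
        · exact Or.inr ⟨h2, hy⟩
        · exact absurd hy (Set.notMem_empty _)
      rcases key n _ hx with ⟨hn0, hy⟩ | ⟨hn1, hy⟩ <;>
        rcases key m _ hx2 with ⟨hm0, hy'⟩ | ⟨hm1, hy'⟩
      · exact hnm (by omega)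
      · -- n = 0, m = 1 : x ∈ Bset and x - 2π ∈ Cset, i.e. x ∈ Aset \ Bset
        subst hn0; subst hm1
        norm_num at hy
        obtain ⟨-, hB⟩ := mem_Cset.1 hy'
        have he : x - 2 * Real.pi * ((1:ℤ):ℝ) + 2 * π = x := by push_cast; ring
        rw [he] at hB
        exact hB hy
      · subst hn1; subst hm0
        norm_num at hy'
        obtain ⟨-, hB⟩ := mem_Cset.1 hy
        have he : x - 2 * Real.pi * ((1:ℤ):ℝ) + 2 * π = x := by push_cast; ring
        rw [he] at hB
        exact hB hy'
      · exact hnm (by omega)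

lemma G0c_dil : DilCongruent G0c (Ico (-(2 * π)) (-(3 * π / 2))) := by
  classical
  have hπ := Real.pi_pos
  refine ⟨fun n => if n = 0 then Bset else if n = -1 then Cset else ∅, ?_, ?_, ?_⟩
  · intro n
    beta_reduce
    split_ifs
    · exact measurable_Bset
    · exact measurable_Cset
    · exact MeasurableSet.empty
  · apply aepart_of_eq
    · apply Set.Subset.antisymm
      · refine Set.iUnion_subset fun n x hx => ?_
        split_ifs at hx with h1 h2
        · exact Or.inl hx
        · exact Or.inr hx
        · exact absurd hx (Set.notMem_empty x)
      · rintro x (hx | hx)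
        · exact Set.mem_iUnion.2 ⟨0, by norm_num; exact hx⟩
        · exact Set.mem_iUnion.2 ⟨-1, by norm_num; exact hx⟩
    · intro n m hnm
      ext x
      simp only [Set.mem_inter_iff, Set.mem_empty_iff_false, iff_false, not_and]
      intro hx hx2
      split_ifs at hx hx2 with h1 h2 h3 h4 h5 h6
      all_goals first
        | exact hx
        | exact hx2
        | exact hnm (by omega)
        | (exact absurd (Set.mem_inter hx hx2) (by rw [Bset_Cset_disj]; exact Set.notMem_empty x))
        | (exact absurd (Set.mem_inter hx2 hx) (by rw [Bset_Cset_disj]; exact Set.notMem_empty x))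
  · have hkey : ∀ x : ℝ,
        x ∈ (fun y => (2:ℝ) ^ (-1:ℤ) * y) '' Cset ↔
          x ∈ Ico (-(2 * π)) (-(3 * π / 2)) \ Bset := by
      intro x
      rw [mem_image_zpow]
      have he : (2:ℝ) ^ (-(-1:ℤ)) * x = 2 * x := by norm_num
      rw [he, mem_Cset]
      have he2 : 2 * x + 2 * π = 2 * x + 2 * π := rfl
      exact Cset_key x
    apply aepart_of_eq
    · apply Set.Subset.antisymm
      · refine Set.iUnion_subset fun n x hx => ?_
        by_cases h1 : n = 0
        · subst h1
          simp only [if_pos rfl] at hx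
          rw [mem_image_zpow] at hx
          norm_num at hx
          exact Bset_sub_D hx
        · by_cases h2 : n = -1
          · subst h2
            simp only [if_neg h1, if_pos rfl] at hx
            exact ((hkey x).1 hx).1
          · simp only [if_neg h1, if_neg h2, Set.image_empty] at hx
            exact absurd hx (Set.notMem_empty _)
      · intro x hx
        by_cases hB : x ∈ Bset
        · refine Set.mem_iUnion.2 ⟨0, ?_⟩
          simp only [if_pos rfl]
          rw [mem_image_zpow]
          norm_num
          exact hB
        · refine Set.mem_iUnion.2 ⟨-1, ?_⟩
          have : (-1 : ℤ) ≠ 0 := by norm_num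
          simp only [if_neg this, if_pos rfl]
          exact (hkey x).2 ⟨hx, hB⟩
    · intro n m hnm
      ext x
      simp only [Set.mem_inter_iff, Set.mem_empty_iff_false, iff_false, not_and]
      intro hx hx2
      have key : ∀ k : ℤ,
          (x ∈ (fun y => (2:ℝ) ^ k * y) ''
              (if k = 0 then Bset else if k = -1 then Cset else ∅) →
            (k = 0 ∧ x ∈ Bset) ∨ (k = -1 ∧ x ∈ Ico (-(2 * π)) (-(3 * π / 2)) \ Bset)) := by
        intro k hy
        by_cases h1 : k = 0
        · subst h1
          simp only [if_pos rfl] at hy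
          rw [mem_image_zpow] at hy
          norm_num at hy
          exact Or.inl ⟨rfl, hy⟩
        · by_cases h2 : k = -1
          · subst h2
            simp only [if_neg h1, if_pos rfl] at hy
            exact Or.inr ⟨rfl, (hkey x).1 hy⟩
          · simp only [if_neg h1, if_neg h2, Set.image_empty] at hy
            exact absurd hy (Set.notMem_empty _)
      rcases key n hx with ⟨hn0, hy⟩ | ⟨hn1, hy⟩ <;>
        rcases key m hx2 with ⟨hm0, hy'⟩ | ⟨hm1, hy'⟩
      · exact hnm (by omega)
      · exact hy'.2 hy
      · exact hy.2 hy'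
      · exact hnm (by omega)




/-- Example 9 of the paper.  Let `E = [−2π, −π) ∪ [π, 2π)`.  There
exists `G₀` as above, and for any such `G₀` the set `G = Gset G₀` is a dyadic wavelet
set contained in `(E − 2π) ∪ E ∪ (E + 2π)` for which `G ∩ [−π, π)` has positive
measure and `(E, G)` is not an interpolation pair. -/
theorem stmt_15 :
    (∃ G₀ : Set ℝ, GoodGzero G₀) ∧
    (∀ G₀ : Set ℝ, GoodGzero G₀ →
      IsDyadicWaveletSet (Gset G₀) ∧
      Gset G₀ ⊆
        ((fun x => x - 2 * π) '' (Ico (-(2 * π)) (-π) ∪ Ico π (2 * π))) ∪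
          (Ico (-(2 * π)) (-π) ∪ Ico π (2 * π)) ∪
          ((fun x => x + 2 * π) '' (Ico (-(2 * π)) (-π) ∪ Ico π (2 * π))) ∧
      0 < volume (Gset G₀ ∩ Ico (-π) π) ∧
      ∀ σ : ℝ → ℝ,
        IsInterpolationMap (Ico (-(2 * π)) (-π) ∪ Ico π (2 * π)) (Gset G₀) σ →
        ¬ (∀ᵐ s : ℝ ∂volume, σ (σ s) = s)) := by
  have hπ := Real.pi_pos
  constructor
  · -- existence of G₀
    refine ⟨G0c, measurable_Bset.union measurable_Cset, ?_, G0c_trans, G0c_dil⟩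
    rintro x (hx | hx)
    · exact Or.inr (Bset_sub_D hx)
    · exact Or.inl (Set.image_mono Set.diff_subset hx)
  · intro G₀ hG
    obtain ⟨hmeas, hsubset, htrans, hdil⟩ := hG
    have hrange := range_of_subset G₀ hsubset
    have hsub : ∀ x ∈ G₀, x < -(3 * π / 2) := by
      intro x hx
      rcases hrange x hx with ⟨h1, h2⟩ | ⟨h1, h2⟩ <;> linarith
    refine ⟨⟨?_, ?_, ?_⟩, ?_, ?_, ?_⟩
    · exact (((measurableSet_Ico.union measurableSet_Ico).union measurableSet_Ico).union
        measurableSet_Ico).union hmeas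
    · obtain ⟨P, hPm, hPG, hPA⟩ := htrans
      exact gset_trans_tiling G₀ hsub P hPG hPA
    · obtain ⟨P, hPm, hPG, hPD⟩ := hdil
      exact gset_dil_tiling G₀ hsub P hPG hPD
    · -- containment in (E - 2π) ∪ E ∪ (E + 2π)
      rintro x ((((hx | hx) | hx) | hx) | hx)
    -- `hx : x ∈ Ico (5π/8) (7π/8)` etc.
      · obtain ⟨h1, h2⟩ := hx
        exact Or.inr ⟨x - 2 * π, Or.inl ⟨by linarith, by linarith⟩,
          by show x - 2 * π + 2 * π = x; ring⟩
      · obtain ⟨h1, h2⟩ := hx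
        exact Or.inl (Or.inr (Or.inr ⟨h1, by linarith⟩))
      · obtain ⟨h1, h2⟩ := hx
        exact Or.inr ⟨x - 2 * π, Or.inr ⟨by linarith, by linarith⟩,
          by show x - 2 * π + 2 * π = x; ring⟩
      · obtain ⟨h1, h2⟩ := hx
        exact Or.inl (Or.inl ⟨x + 2 * π, Or.inr ⟨by linarith, by linarith⟩,
          by show x + 2 * π - 2 * π = x; ring⟩)
      · rcases hrange x hx with ⟨h1, h2⟩ | ⟨h1, h2⟩
        · exact Or.inl (Or.inl ⟨x + 2 * π, Or.inl ⟨by linarith, by linarith⟩,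
            by show x + 2 * π - 2 * π = x; ring⟩)
        · exact Or.inl (Or.inr (Or.inl ⟨h1, by linarith⟩))
    · -- positive measure
      have hsub2 : Ico (5 * π / 8) (7 * π / 8) ⊆ Gset G₀ ∩ Ico (-π) π := by
        rintro x ⟨h1, h2⟩
        exact ⟨Or.inl (Or.inl (Or.inl (Or.inl ⟨h1, h2⟩))), ⟨by linarith, by linarith⟩⟩
      calc (0 : ENNReal) < volume (Ico (5 * π / 8) (7 * π / 8)) := by
            rw [Real.volume_Ico]
            exact ENNReal.ofReal_pos.2 (by linarith)
      _ ≤ volume (Gset G₀ ∩ Ico (-π) π) := measure_mono hsub2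
    · intro σ hσ
      exact no_interp G₀ hrange σ hσ
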